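/- arXiv:2112.04670 — 3 statements merged into one kernel-verified Lean document; each statement's English description precedes it below -/
import Mathlib

section
/- Let X be a Banach space, Z a closed subspace of X, E : Z → X the natural isometric embedding, and E* : X* → Z* the adjoint quotient map sending each functional to its restriction to Z. Let A ⊆ Z* and D := (E*)^{-1}(A). Then for every ordinal α, D^{(α)} = (E*)^{-1}(A^{(α)}), where the derived set D^{(α)} is taken in X* and the derived set A^{(α)} in Z*. -/
open Set Filter Topology

noncomputable section

namespace Paper

/-- `y` is an up-neighbor of `x` within the subforest `S`: both belong to `S`, `x < y`,
and no vertex of `S` lies strictly between them. -/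
def UpNbrIn {P : Type*} [PartialOrder P] (S : Set P) (x y : P) : Prop :=
  x ∈ S ∧ y ∈ S ∧ x < y ∧ ∀ z ∈ S, ¬(x < z ∧ z < y)

/-- `x` is a terminal vertex of the subforest `S`: it has no up-neighbors within `S`. -/
def TerminalIn {P : Type*} [PartialOrder P] (S : Set P) (x : P) : Prop :=
  x ∈ S ∧ ∀ y, ¬UpNbrIn S x y

/-- One step of the derived forest operation: delete every terminal vertex whose
down-neighbor has infinitely many terminal up-neighbors. -/
def derStep {P : Type*} [PartialOrder P] (S : Set P) : Set P :=
  S \ {x | TerminalIn S x ∧ ∃ u, UpNbrIn S u x ∧ {y | UpNbrIn S u y ∧ TerminalIn S y}.Infinite}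

/-- Transfinite iteration of the derived forest operation: `derIter S β = S^{(β)}`,
with intersections at limit stages. -/
def derIter {P : Type*} [PartialOrder P] (S : Set P) (β : Ordinal) : Set P :=
  Ordinal.limitRecOn β S (fun _ T => derStep T)
    (fun β _ ih => ⋂ (γ : Ordinal), ⋂ (h : γ < β), ih γ h)

/-- Weak* closure of a set in the dual of a real normed space. -/
def wcl {Z : Type*} [NormedAddCommGroup Z] [NormedSpace ℝ Z]
    (A : Set (StrongDual ℝ Z)) : Set (StrongDual ℝ Z) :=
  StrongDual.toWeakDual ⁻¹' closure (StrongDual.toWeakDual '' A)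

/-- The weak* derived set `A^{(1)} = ⋃ₙ weak*-closure (A ∩ n B_{Z*})`. -/
def derSet {Z : Type*} [NormedAddCommGroup Z] [NormedSpace ℝ Z]
    (A : Set (StrongDual ℝ Z)) : Set (StrongDual ℝ Z) :=
  ⋃ n : ℕ, wcl (A ∩ {f | ‖f‖ ≤ (n : ℝ)})

/-- Transfinite weak* derived sets: `A^{(0)} = A`, `A^{(β+1)} = (A^{(β)})^{(1)}`, and
`A^{(β)} = ⋃_{γ<β} A^{(γ)}` at limit stages. -/
def derSetIter {Z : Type*} [NormedAddCommGroup Z] [NormedSpace ℝ Z]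
    (A : Set (StrongDual ℝ Z)) (α : Ordinal) : Set (StrongDual ℝ Z) :=
  Ordinal.limitRecOn α A (fun _ T => derSet T)
    (fun α _ ih => ⋃ (β : Ordinal), ⋃ (h : β < α), ih β h)

/-- The coefficient attached to a vertex `u` of the forest: the label of its down-neighbor,
or the label of `u` itself when `u` is an initial vertex (`n₀ = n₁`). -/
def coefN {P : Type*} [PartialOrder P] (e : P → ℕ) (u : P) : ℕ :=
  letI := Classical.dec (∃ w, w ⋖ u)
  if h : ∃ w, w ⋖ u then e h.choose else e u

/-- The vector `z*(v)` shortened to the subforest `S`: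
`∑_{u ≤ v, u ∈ S} n_{i-1} z*_{n_i}`. -/
def shortVec {P : Type*} [PartialOrder P] {Z : Type*} [NormedAddCommGroup Z] [NormedSpace ℝ Z]
    (e : P → ℕ) (zs : ℕ → StrongDual ℝ Z) (S : Set P) (v : P) : StrongDual ℝ Z :=
  ∑ᶠ u ∈ ({w | w ≤ v} ∩ S), (coefN e u : ℝ) • zs (e u)

/-- The shortening `X^β` of the set `X_α` to the subforest `S` (for `S = (F_α)^β`);
for `S = univ` this is `X_α` itself. -/
def XsetOf {P : Type*} [PartialOrder P] {Z : Type*} [NormedAddCommGroup Z] [NormedSpace ℝ Z]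
    (e : P → ℕ) (zs : ℕ → StrongDual ℝ Z) (S : Set P) : Set (StrongDual ℝ Z) :=
  {x | ∃ v : P, (¬∃ y, v ⋖ y) ∧ x = shortVec e zs S v}

/-- The largest index in the support of a vector of `X^β` (read off by evaluating
against the basic sequence); it is the label of the vertex `v(x)`. -/
def topIdx {Z : Type*} [NormedAddCommGroup Z] [NormedSpace ℝ Z]
    (z : ℕ → Z) (x : StrongDual ℝ Z) : ℕ :=
  sSup {n | x (z n) ≠ 0}

/-- The vector `y(x)`: `x` with the coordinate at its top vertex `v(x)` replaced by `0`. -/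
def truncTop {Z : Type*} [NormedAddCommGroup Z] [NormedSpace ℝ Z]
    (z : ℕ → Z) (zs : ℕ → StrongDual ℝ Z) (x : StrongDual ℝ Z) :
    StrongDual ℝ Z :=
  x - x (z (topIdx z x)) • zs (topIdx z x)

section Aux
open NormedSpace WeakDual

variable {X : Type*} [NormedAddCommGroup X] [NormedSpace ℝ X] (Z : Submodule ℝ X)

/-- The restriction map on weak duals. -/
def Rw : WeakDual ℝ X → WeakDual ℝ ↥Z := fun f =>
  StrongDual.toWeakDual ((WeakDual.toStrongDual f).comp Z.subtypeL)

lemma Rw_continuous : Continuous (Rw Z) := by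
  apply WeakBilin.continuous_of_continuous_eval
  intro z
  exact WeakBilin.eval_continuous (topDualPairing ℝ X) (z : X)

lemma norm_restrict_le (f : StrongDual ℝ X) : ‖f.comp Z.subtypeL‖ ≤ ‖f‖ := by
  refine ContinuousLinearMap.opNorm_le_bound _ (norm_nonneg f) fun z => ?_
  simpa using f.le_opNorm (z : X)

lemma derSet_preimage (A : Set (StrongDual ℝ ↥Z)) :
    derSet ((fun f : StrongDual ℝ X => f.comp Z.subtypeL) ⁻¹' A)
      = (fun f : StrongDual ℝ X => f.comp Z.subtypeL) ⁻¹' derSet A := by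
  set R : StrongDual ℝ X → StrongDual ℝ ↥Z := fun f => f.comp Z.subtypeL with hR
  ext x
  simp only [derSet, mem_iUnion, mem_preimage]
  constructor
  · rintro ⟨n, hx⟩
    refine ⟨n, ?_⟩
    have hx' : StrongDual.toWeakDual x ∈ closure (StrongDual.toWeakDual '' (R ⁻¹' A ∩ {f | ‖f‖ ≤ (n:ℝ)})) := hx
    have hmem := map_mem_closure (Rw_continuous Z) hx' (t := StrongDual.toWeakDual '' (A ∩ {f | ‖f‖ ≤ (n:ℝ)})) ?_
    · exact hmem
    · rintro _ ⟨f, ⟨hfA, hfn⟩, rfl⟩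
      exact ⟨R f, ⟨hfA, le_trans (norm_restrict_le Z f) hfn⟩, rfl⟩
  · rintro ⟨n, hx⟩
    refine ⟨n + n + ⌈‖x‖⌉₊, ?_⟩
    -- the compact ball
    set K : Set (WeakDual ℝ X) := toStrongDual ⁻¹' Metric.closedBall 0 (n:ℝ) with hK
    have hKc : IsCompact K := WeakDual.isCompact_closedBall (𝕜 := ℝ) (E := X) 0 (n:ℝ)
    set M : Set (WeakDual ℝ X) :=
      {f | ‖WeakDual.toStrongDual f‖ ≤ (n:ℝ) ∧ R (WeakDual.toStrongDual f) ∈ A} with hM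
    have hMK : M ⊆ K := fun f hf => by
      simpa [hK, Metric.mem_closedBall, dist_zero_right] using hf.1
    have hclM : IsCompact (closure M) :=
      hKc.of_isClosed_subset isClosed_closure (closure_minimal hMK hKc.isClosed)
    have hC : IsCompact (Rw Z '' closure M) := hclM.image (Rw_continuous Z)
    have hsub : StrongDual.toWeakDual '' (A ∩ {f | ‖f‖ ≤ (n:ℝ)}) ⊆ Rw Z '' closure M := by
      rintro _ ⟨g, ⟨hgA, hgn⟩, rfl⟩
      obtain ⟨f, hfe, hfn⟩ := exists_extension_norm_eq Z g
      have hRf : R f = g := by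
        ext z; exact hfe z
      refine ⟨StrongDual.toWeakDual f, subset_closure ⟨?_, ?_⟩, ?_⟩
      · show ‖WeakDual.toStrongDual (StrongDual.toWeakDual f)‖ ≤ (n:ℝ)
        rw [show WeakDual.toStrongDual (StrongDual.toWeakDual f) = f from rfl, hfn]; exact hgn
      · show R (WeakDual.toStrongDual (StrongDual.toWeakDual f)) ∈ A
        rw [show WeakDual.toStrongDual (StrongDual.toWeakDual f) = f from rfl, hRf]; exact hgA
      · show Rw Z (StrongDual.toWeakDual f) = StrongDual.toWeakDual g
        rw [Rw, show WeakDual.toStrongDual (StrongDual.toWeakDual f) = f from rfl]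
        exact congrArg _ hRf
    have hx' : StrongDual.toWeakDual (R x) ∈ Rw Z '' closure M :=
      (closure_minimal hsub hC.isClosed) hx
    obtain ⟨f', hf'cl, hf'⟩ := hx'
    have hf'n : ‖WeakDual.toStrongDual f'‖ ≤ (n:ℝ) := by
      have := closure_minimal hMK hKc.isClosed hf'cl
      simpa [hK, Metric.mem_closedBall, dist_zero_right] using this
    have hRf' : R (WeakDual.toStrongDual f') = R x := by
      have : WeakDual.toStrongDual (Rw Z f') = WeakDual.toStrongDual (StrongDual.toWeakDual (R x)) := by
        rw [hf']
      simpa [Rw] using this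
    -- translation
    set c : WeakDual ℝ X := StrongDual.toWeakDual x - f' with hc
    have hφ : Continuous fun f : WeakDual ℝ X => c + f := by
      apply WeakBilin.continuous_of_continuous_eval
      intro y
      have h1 : Continuous fun f : WeakDual ℝ X => f y :=
        WeakBilin.eval_continuous (topDualPairing ℝ X) y
      exact (continuous_const.add h1 : Continuous fun f : WeakDual ℝ X => c y + f y)
    have hxeq : StrongDual.toWeakDual x = c + f' := by simp [hc]
    have hmem : StrongDual.toWeakDual x ∈ closure ((fun f => c + f) '' M) := by
      rw [hxeq]
      exact image_closure_subset_closure_image hφ ⟨f', hf'cl, rfl⟩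
    show StrongDual.toWeakDual x ∈
      closure (StrongDual.toWeakDual '' (R ⁻¹' A ∩ {f | ‖f‖ ≤ ((n + n + ⌈‖x‖⌉₊ : ℕ) : ℝ)}))
    refine closure_mono ?_ hmem
    rintro _ ⟨f, ⟨hfn, hfA⟩, rfl⟩
    refine ⟨x - WeakDual.toStrongDual f' + WeakDual.toStrongDual f, ⟨?_, ?_⟩, ?_⟩
    · show R _ ∈ A
      have : R (x - WeakDual.toStrongDual f' + WeakDual.toStrongDual f)
          = R x - R (WeakDual.toStrongDual f') + R (WeakDual.toStrongDual f) := by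
        simp [hR, ContinuousLinearMap.add_comp, ContinuousLinearMap.sub_comp]
      rw [this, hRf']
      simpa using hfA
    · show ‖_‖ ≤ ((n + n + ⌈‖x‖⌉₊ : ℕ) : ℝ)
      calc ‖x - WeakDual.toStrongDual f' + WeakDual.toStrongDual f‖
          ≤ ‖x - WeakDual.toStrongDual f'‖ + ‖WeakDual.toStrongDual f‖ := norm_add_le _ _
        _ ≤ (‖x‖ + ‖WeakDual.toStrongDual f'‖) + ‖WeakDual.toStrongDual f‖ := by
            gcongr; exact norm_sub_le _ _
        _ ≤ (‖x‖ + n) + n := by gcongr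
        _ ≤ ((n + n + ⌈‖x‖⌉₊ : ℕ) : ℝ) := by
            push_cast
            have := Nat.le_ceil ‖x‖
            linarith
    · show StrongDual.toWeakDual _ = c + f
      simp [hc]


lemma derSetIter_zero {Z : Type*} [NormedAddCommGroup Z] [NormedSpace ℝ Z]
    (A : Set (StrongDual ℝ Z)) : derSetIter A 0 = A :=
  Ordinal.limitRecOn_zero _ _ _

lemma derSetIter_succ {Z : Type*} [NormedAddCommGroup Z] [NormedSpace ℝ Z]
    (A : Set (StrongDual ℝ Z)) (β : Ordinal) :
    derSetIter A (Order.succ β) = derSet (derSetIter A β) :=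
  Ordinal.limitRecOn_succ _ _ _ _

lemma derSetIter_limit {Z : Type*} [NormedAddCommGroup Z] [NormedSpace ℝ Z]
    (A : Set (StrongDual ℝ Z)) {β : Ordinal} (hβ : Order.IsSuccLimit β) :
    derSetIter A β = ⋃ (γ : Ordinal), ⋃ (_ : γ < β), derSetIter A γ :=
  Ordinal.limitRecOn_limit _ _ _ _ hβ

end Aux

theorem statement2 {X : Type*} [NormedAddCommGroup X] [NormedSpace ℝ X] [CompleteSpace X]
    (Z : Submodule ℝ X) (hZ : IsClosed (Z : Set X))
    (A : Set (StrongDual ℝ ↥Z)) (α : Ordinal) :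
    derSetIter ((fun f : StrongDual ℝ X => f.comp Z.subtypeL) ⁻¹' A) α
      = (fun f : StrongDual ℝ X => f.comp Z.subtypeL) ⁻¹' derSetIter A α := by
  induction α using Ordinal.limitRecOn with
  | zero => rw [derSetIter_zero, derSetIter_zero]
  | add_one β ih => rw [Ordinal.add_one_eq_succ, derSetIter_succ, derSetIter_succ, ih, derSet_preimage]
  | limit β hβ ih =>
      rw [derSetIter_limit _ hβ, derSetIter_limit _ hβ]
      simp only [preimage_iUnion]
      exact iUnion_congr fun γ => iUnion_congr fun h => ih γ h

end Paper
end
end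

section
/- For all finite ordinals n and k with 1 ≤ k ≤ n, the derived forest of order k of F_n is isomorphic (as a partially ordered set, equivalently as a forest) to F_{n−k}: (F_n)^k = F_{n−k}. -/
open Set Filter Topology

noncomputable section

namespace Paper

section Transfer

variable {P Q : Type*} [PartialOrder P] [PartialOrder Q] {S : Set P} {T : Set Q}

lemma upnbr_transfer_mp (f : S ≃o T) {x y : S} (h : UpNbrIn S x.val y.val) :
    UpNbrIn T (f x).val (f y).val := by
  obtain ⟨-, -, hlt, hbet⟩ := h
  refine ⟨(f x).2, (f y).2, Subtype.coe_lt_coe.2 (f.lt_iff_lt.2 (Subtype.coe_lt_coe.1 hlt)), ?_⟩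
  intro z hz hc
  have h1 : f x < ⟨z, hz⟩ := Subtype.coe_lt_coe.1 hc.1
  have h2 : (⟨z, hz⟩ : T) < f y := Subtype.coe_lt_coe.1 hc.2
  refine hbet (f.symm ⟨z, hz⟩).val (f.symm ⟨z, hz⟩).2 ⟨?_, ?_⟩
  · have := f.symm.lt_iff_lt.2 h1
    rw [f.symm_apply_apply] at this
    exact Subtype.coe_lt_coe.2 this
  · have := f.symm.lt_iff_lt.2 h2
    rw [f.symm_apply_apply] at this
    exact Subtype.coe_lt_coe.2 this

lemma upnbr_transfer (f : S ≃o T) (x y : S) :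
    UpNbrIn S x.val y.val ↔ UpNbrIn T (f x).val (f y).val := by
  refine ⟨upnbr_transfer_mp f, fun h => ?_⟩
  have := upnbr_transfer_mp f.symm (x := f x) (y := f y) h
  simpa using this

lemma terminal_transfer_mp (f : S ≃o T) (x : S) (h : TerminalIn S x.val) :
    TerminalIn T (f x).val := by
  obtain ⟨-, h⟩ := h
  refine ⟨(f x).2, fun y hy => ?_⟩
  have hyT : y ∈ T := hy.2.1
  have : UpNbrIn T (f x).val (f (f.symm ⟨y, hyT⟩)).val := by simpa using hy
  exact h _ ((upnbr_transfer f x _).2 this)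

lemma terminal_transfer (f : S ≃o T) (x : S) :
    TerminalIn S x.val ↔ TerminalIn T (f x).val := by
  refine ⟨terminal_transfer_mp f x, fun h => ?_⟩
  have := terminal_transfer_mp f.symm (f x) h
  simpa using this

lemma infinite_transfer_mp (f : S ≃o T) (v : S)
    (hinf : {y | UpNbrIn S v.val y ∧ TerminalIn S y}.Infinite) :
    {y | UpNbrIn T (f v).val y ∧ TerminalIn T y}.Infinite := by
  have e1 : {y | UpNbrIn S v.val y ∧ TerminalIn S y} =
      Subtype.val '' {y : S | UpNbrIn S v.val y.val ∧ TerminalIn S y.val} := by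
    ext y
    constructor
    · rintro ⟨h1, h2⟩
      exact ⟨⟨y, h1.2.1⟩, ⟨h1, h2⟩, rfl⟩
    · rintro ⟨w, hw, rfl⟩
      exact hw
  rw [e1] at hinf
  have hA : {y : S | UpNbrIn S v.val y.val ∧ TerminalIn S y.val}.Infinite :=
    Set.Infinite.of_image _ hinf
  have hB := (hA.image (f.injective.injOn)).image (Subtype.val_injective.injOn)
  refine hB.mono ?_
  rintro _ ⟨_, ⟨w, hw, rfl⟩, rfl⟩
  exact ⟨upnbr_transfer_mp f (x := v) (y := w) hw.1, terminal_transfer_mp f w hw.2⟩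

lemma infinite_transfer (f : S ≃o T) (u : S) :
    {y | UpNbrIn S u.val y ∧ TerminalIn S y}.Infinite ↔
      {y | UpNbrIn T (f u).val y ∧ TerminalIn T y}.Infinite := by
  refine ⟨infinite_transfer_mp f u, fun h => ?_⟩
  have := infinite_transfer_mp f.symm (f u) h
  simpa using this

lemma deleted_transfer_mp (f : S ≃o T) (v : S)
    (h : TerminalIn S v.val ∧ ∃ u, UpNbrIn S u v.val ∧
        {y | UpNbrIn S u y ∧ TerminalIn S y}.Infinite) :
    TerminalIn T (f v).val ∧ ∃ u, UpNbrIn T u (f v).val ∧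
        {y | UpNbrIn T u y ∧ TerminalIn T y}.Infinite := by
  obtain ⟨ht, u, hu, hinf⟩ := h
  have huS : u ∈ S := hu.1
  refine ⟨terminal_transfer_mp f v ht, (f ⟨u, huS⟩).val, ?_, ?_⟩
  · exact upnbr_transfer_mp f (x := ⟨u, huS⟩) (y := v) hu
  · exact infinite_transfer_mp f ⟨u, huS⟩ hinf

lemma mem_derStep_transfer (f : S ≃o T) (x : S) :
    x.val ∈ derStep S ↔ (f x).val ∈ derStep T := by
  constructor
  · rintro ⟨-, hnot⟩
    refine ⟨(f x).2, fun hmem => hnot ?_⟩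
    have := deleted_transfer_mp f.symm (f x) hmem
    simpa using this
  · rintro ⟨-, hnot⟩
    exact ⟨x.2, fun hmem => hnot (deleted_transfer_mp f x hmem)⟩

def derStepIso (f : S ≃o T) : (derStep S : Set P) ≃o (derStep T : Set Q) where
  toFun x := ⟨(f ⟨x.val, x.2.1⟩).val, (mem_derStep_transfer f ⟨x.val, x.2.1⟩).1 x.2⟩
  invFun y := ⟨(f.symm ⟨y.val, y.2.1⟩).val, by
    have := (mem_derStep_transfer f (f.symm ⟨y.val, y.2.1⟩)).2 (by simpa using y.2)
    exact this⟩
  left_inv x := by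
    apply Subtype.ext
    simp
  right_inv y := by
    apply Subtype.ext
    simp
  map_rel_iff' {a b} := by
    change (f ⟨a.val, a.2.1⟩).val ≤ (f ⟨b.val, b.2.1⟩).val ↔ a ≤ b
    rw [Subtype.coe_le_coe, f.le_iff_le, Subtype.mk_le_mk]
    exact Subtype.coe_le_coe

end Transfer


section UnivIso

variable {P Q : Type*} [PartialOrder P] [PartialOrder Q]

def univIso (e : P ≃o Q) : (Set.univ : Set P) ≃o (Set.univ : Set Q) :=
  (OrderIso.Set.univ).trans (e.trans (OrderIso.Set.univ).symm)

end UnivIso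

section Struct

variable {Q : Type*} [PartialOrder Q]

local notation "A" => (Σ _ : ℕ, Q)
local notation "W" => WithBot (Σ _ : ℕ, Q)

lemma not_lt_bot' (x : W) : ¬ x < ⊥ := not_lt_bot

lemma smk_lt {i : ℕ} {a b : Q} : (⟨i, a⟩ : Σ _ : ℕ, Q) < ⟨i, b⟩ ↔ a < b := Sigma.mk_lt_mk_iff

lemma sfst_lt {p q : Σ _ : ℕ, Q} (h : p < q) : p.1 = q.1 := (Sigma.lt_def.1 h).1

lemma wmk_lt {i : ℕ} {a b : Q} :
    (↑(⟨i, a⟩ : Σ _ : ℕ, Q) : W) < ↑(⟨i, b⟩ : Σ _ : ℕ, Q) ↔ a < b :=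
  WithBot.coe_lt_coe.trans Sigma.mk_lt_mk_iff

lemma wfst_lt {p q : Σ _ : ℕ, Q} (h : (↑p : W) < ↑q) : p.1 = q.1 :=
  sfst_lt (WithBot.coe_lt_coe.1 h)


lemma upnbr_coe_iff {i : ℕ} {a b : Q} :
    UpNbrIn (Set.univ : Set W) (↑(⟨i, a⟩ : A)) (↑(⟨i, b⟩ : A)) ↔
      UpNbrIn (Set.univ : Set Q) a b := by
  constructor
  · rintro ⟨-, -, hlt, hbet⟩
    refine ⟨Set.mem_univ _, Set.mem_univ _, wmk_lt.1 hlt, ?_⟩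
    rintro c - hc
    exact hbet (↑(⟨i, c⟩ : A)) (Set.mem_univ _)
      ⟨wmk_lt.2 hc.1,
       wmk_lt.2 hc.2⟩
  · rintro ⟨-, -, hlt, hbet⟩
    refine ⟨Set.mem_univ _, Set.mem_univ _, wmk_lt.2 hlt, ?_⟩
    rintro z - hz
    induction z using WithBot.recBotCoe with
    | bot => exact not_lt_bot hz.1
    | coe q =>
      obtain ⟨j, c⟩ := q
      obtain rfl : i = j := wfst_lt hz.1
      exact hbet c (Set.mem_univ _) ⟨wmk_lt.1 hz.1, wmk_lt.1 hz.2⟩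

lemma upnbr_fst_eq {p q : Σ _ : ℕ, Q} (h : UpNbrIn (Set.univ : Set W) ↑p ↑q) : p.1 = q.1 :=
  wfst_lt h.2.2.1

lemma upnbr_bot_iff {p : A} :
    UpNbrIn (Set.univ : Set W) ⊥ ↑p ↔ ∀ c : Q, ¬ c < p.2 := by
  obtain ⟨i, a⟩ := p
  constructor
  · rintro ⟨-, -, -, hbet⟩ c hc
    exact hbet (↑(⟨i, c⟩ : A)) (Set.mem_univ _)
      ⟨WithBot.bot_lt_coe _, wmk_lt.2 hc⟩
  · intro hmin
    refine ⟨Set.mem_univ _, Set.mem_univ _, WithBot.bot_lt_coe _, ?_⟩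
    rintro z - hz
    induction z using WithBot.recBotCoe with
    | bot => exact lt_irrefl _ hz.1
    | coe q =>
      obtain ⟨j, c⟩ := q
      obtain rfl : j = i := wfst_lt hz.2
      exact hmin c (wmk_lt.1 hz.2)

lemma terminal_coe_iff {p : A} :
    TerminalIn (Set.univ : Set W) ↑p ↔ TerminalIn (Set.univ : Set Q) p.2 := by
  obtain ⟨i, a⟩ := p
  constructor
  · rintro ⟨-, h⟩
    exact ⟨Set.mem_univ _, fun b hb => h (↑(⟨i, b⟩ : A)) (upnbr_coe_iff.2 hb)⟩
  · rintro ⟨-, h⟩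
    refine ⟨Set.mem_univ _, fun y hy => ?_⟩
    induction y using WithBot.recBotCoe with
    | bot => exact not_lt_bot hy.2.2.1
    | coe q =>
      obtain ⟨j, b⟩ := q
      obtain rfl : i = j := upnbr_fst_eq hy
      exact h b (upnbr_coe_iff.1 hy)

lemma exists_isMin (hfin : ∀ x : Q, {y | y ≤ x}.Finite) (hne : Nonempty Q) :
    ∃ a : Q, IsMin a := by
  obtain ⟨a0⟩ := hne
  obtain ⟨b, hb, hmin⟩ := (hfin a0).exists_le_minimal (a := a0) le_rfl
  refine ⟨b, fun c hc => ?_⟩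
  exact hmin.2 (hc.trans hb) hc

lemma bot_not_terminal (hfin : ∀ x : Q, {y | y ≤ x}.Finite) (hne : Nonempty Q) :
    ¬ TerminalIn (Set.univ : Set W) ⊥ := by
  obtain ⟨m, hm⟩ := exists_isMin hfin hne
  rintro ⟨-, h⟩
  exact h (↑(⟨0, m⟩ : A)) (upnbr_bot_iff.2 fun c hc => hc.not_ge (hm hc.le))

lemma infinite_coe_iff {i : ℕ} {b : Q} :
    {y : W | UpNbrIn (Set.univ : Set W) (↑(⟨i, b⟩ : A)) y ∧ TerminalIn (Set.univ : Set W) y}.Infinite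
      ↔ {c : Q | UpNbrIn (Set.univ : Set Q) b c ∧ TerminalIn (Set.univ : Set Q) c}.Infinite := by
  have e : {y : W | UpNbrIn (Set.univ : Set W) (↑(⟨i, b⟩ : A)) y ∧ TerminalIn (Set.univ : Set W) y}
      = (fun c : Q => (↑(⟨i, c⟩ : A) : W)) ''
        {c : Q | UpNbrIn (Set.univ : Set Q) b c ∧ TerminalIn (Set.univ : Set Q) c} := by
    ext y
    constructor
    · rintro ⟨h1, h2⟩
      induction y using WithBot.recBotCoe with
      | bot => exact absurd h1.2.2.1 not_lt_bot
      | coe q =>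
        obtain ⟨j, c⟩ := q
        obtain rfl : i = j := upnbr_fst_eq h1
        exact ⟨c, ⟨upnbr_coe_iff.1 h1, terminal_coe_iff.1 h2⟩, rfl⟩
    · rintro ⟨c, ⟨h1, h2⟩, rfl⟩
      exact ⟨upnbr_coe_iff.2 h1, terminal_coe_iff.2 h2⟩
  rw [e]
  have hinj : Function.Injective (fun c : Q => (↑(⟨i, c⟩ : A) : W)) := by
    intro c d h
    have := WithBot.coe_injective h
    exact sigma_mk_injective this
  exact Set.infinite_image_iff hinj.injOn

lemma derStep_withBot_sigma
    (hfin : ∀ x : Q, {y | y ≤ x}.Finite) (hne : Nonempty Q)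
    (h2 : ∀ a : Q, IsMin a → ¬ TerminalIn (Set.univ : Set Q) a) :
    derStep (Set.univ : Set W) =
      insert (⊥ : W) ((fun p : A => (↑p : W)) ''
        {p : A | p.2 ∈ derStep (Set.univ : Set Q)}) := by
  ext x
  induction x using WithBot.recBotCoe with
  | bot =>
    simp only [Set.mem_insert_iff, true_or, iff_true]
    exact ⟨Set.mem_univ _, fun hdel => bot_not_terminal hfin hne hdel.1⟩
  | coe p =>
    obtain ⟨i, a⟩ := p
    constructor
    · rintro ⟨-, hnot⟩
      refine Or.inr ⟨⟨i, a⟩, ⟨Set.mem_univ _, fun hdel => hnot ?_⟩, rfl⟩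
      obtain ⟨ht, b, hb, hinf⟩ := hdel
      exact ⟨terminal_coe_iff.2 ht, ↑(⟨i, b⟩ : A), upnbr_coe_iff.2 hb, infinite_coe_iff.2 hinf⟩
    · rintro (hbot | ⟨⟨j, c⟩, hc, heq⟩)
      · exact absurd hbot (by simp)
      · obtain ⟨rfl, rfl⟩ : i = j ∧ a = c := by
          have := WithBot.coe_injective heq.symm
          cases this
          exact ⟨rfl, rfl⟩
        refine ⟨Set.mem_univ _, ?_⟩
        rintro ⟨ht, u, hu, hinf⟩
        induction u using WithBot.recBotCoe with
        | bot =>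
          -- then a is minimal and terminal: contradiction with h2
          have hterm : TerminalIn (Set.univ : Set Q) a := terminal_coe_iff.1 ht
          have hmin : IsMin a := by
            intro c' hc'
            rcases hc'.lt_or_eq with h | h
            · exact absurd h (upnbr_bot_iff.1 hu c')
            · exact le_of_eq h.symm
          exact h2 a hmin hterm
        | coe q =>
          obtain ⟨j', b⟩ := q
          obtain rfl : j' = i := upnbr_fst_eq hu
          exact hc.2 ⟨terminal_coe_iff.1 ht, b, upnbr_coe_iff.1 hu, infinite_coe_iff.1 hinf⟩

lemma derStep_withBot_sigma_subsingleton (hsub : ∀ a b : Q, a = b) (hne : Nonempty Q) :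
    derStep (Set.univ : Set W) = {(⊥ : W)} := by
  obtain ⟨a0⟩ := hne
  have hnolt : ∀ a b : Q, ¬ a < b := fun a b h => h.ne (hsub a b)
  have htermQ : ∀ a : Q, TerminalIn (Set.univ : Set Q) a := fun a =>
    ⟨Set.mem_univ _, fun b hb => hnolt a b hb.2.2.1⟩
  have hup : ∀ (i : ℕ) (a : Q), UpNbrIn (Set.univ : Set W) ⊥ (↑(⟨i, a⟩ : Σ _ : ℕ, Q)) :=
    fun i a => upnbr_bot_iff.2 (fun c hc => hnolt c a hc)
  ext x
  induction x using WithBot.recBotCoe with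
  | bot =>
    simp only [Set.mem_singleton_iff, eq_self_iff_true, iff_true]
    refine ⟨Set.mem_univ _, fun hdel => ?_⟩
    exact hdel.1.2 _ (hup 0 a0)
  | coe p =>
    obtain ⟨i, a⟩ := p
    simp only [Set.mem_singleton_iff]
    constructor
    · rintro ⟨-, hnot⟩
      exfalso
      refine hnot ⟨?_, ⊥, hup i a, ?_⟩
      · exact terminal_coe_iff.2 (htermQ a)
      · refine Set.infinite_of_injective_forall_mem
          (f := fun n : ℕ => (↑(⟨n, a⟩ : Σ _ : ℕ, Q) : W)) ?_ ?_
        · intro n m h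
          have := WithBot.coe_injective h
          exact congrArg Sigma.fst this
        · intro n
          exact ⟨hup n a, terminal_coe_iff.2 (htermQ a)⟩
    · intro h
      exact absurd h (by simp)

end Struct

section Isos

lemma smk_le' {R : Type*} [PartialOrder R] {i : ℕ} {a b : R} :
    (⟨i, a⟩ : Σ _ : ℕ, R) ≤ ⟨i, b⟩ ↔ a ≤ b := Sigma.mk_le_mk_iff

lemma sle_fst {R : Type*} [PartialOrder R] {p q : Σ _ : ℕ, R} (h : p ≤ q) : p.1 = q.1 :=
  (Sigma.le_def.1 h).1


/-- order iso between two "unique" partial orders -/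
def uniqueIso {α β : Type*} [PartialOrder α] [PartialOrder β]
    (ha : ∀ x y : α, x = y) (hb : ∀ x y : β, x = y) (a0 : α) (b0 : β) : α ≃o β where
  toFun _ := b0
  invFun _ := a0
  left_inv x := ha a0 x
  right_inv y := hb b0 y
  map_rel_iff' {x y} := by
    constructor
    · intro _
      exact le_of_eq (ha x y)
    · intro _
      exact le_rfl

def sigmaCongr {α β : Type*} [PartialOrder α] [PartialOrder β] (f : α ≃o β) :
    (Σ _ : ℕ, α) ≃o (Σ _ : ℕ, β) where
  toFun p := ⟨p.1, f p.2⟩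
  invFun p := ⟨p.1, f.symm p.2⟩
  left_inv p := by cases p; simp
  right_inv p := by cases p; simp
  map_rel_iff' {p q} := by
    obtain ⟨i, a⟩ := p
    obtain ⟨j, b⟩ := q
    constructor
    · intro h
      obtain rfl : i = j := sle_fst h
      have : f a ≤ f b := smk_le'.1 h
      exact smk_le'.2 (f.le_iff_le.1 this)
    · intro h
      obtain rfl : i = j := sle_fst h
      exact smk_le'.2 (f.le_iff_le.2 (smk_le'.1 h))

def sigmaSetIso {Q : Type*} [PartialOrder Q] (t : Set Q) :
    ({p : Σ _ : ℕ, Q | p.2 ∈ t} : Set (Σ _ : ℕ, Q)) ≃o (Σ _ : ℕ, t) where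
  toFun x := ⟨x.val.1, ⟨x.val.2, x.2⟩⟩
  invFun y := ⟨⟨y.1, y.2.val⟩, y.2.2⟩
  left_inv x := rfl
  right_inv y := rfl
  map_rel_iff' {x y} := by
    obtain ⟨⟨i, a⟩, ha⟩ := x
    obtain ⟨⟨j, b⟩, hb⟩ := y
    constructor
    · intro h
      obtain rfl : i = j := sle_fst h
      have hab : (⟨a, ha⟩ : t) ≤ ⟨b, hb⟩ := smk_le'.1 h
      exact Subtype.mk_le_mk.2 (smk_le'.2 (Subtype.mk_le_mk.1 hab))
    · intro h
      have h' : (⟨i, a⟩ : Σ _ : ℕ, Q) ≤ ⟨j, b⟩ := Subtype.mk_le_mk.1 h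
      obtain rfl : i = j := sle_fst h'
      exact smk_le'.2 (Subtype.mk_le_mk.2 (smk_le'.1 h'))

def withBotSetIso {A : Type*} [PartialOrder A] (s : Set A) :
    ((insert (⊥ : WithBot A) ((fun a : A => (↑a : WithBot A)) '' s)) : Set (WithBot A)) ≃o
      WithBot s where
  toFun x :=
    WithBot.recBotCoe (C := fun w => w ∈ insert (⊥ : WithBot A) ((fun a : A => (↑a : WithBot A)) '' s) → WithBot s)
      (fun _ => (⊥ : WithBot s))
      (fun a h => (⟨a, by
        rcases h with h | ⟨b, hb, hba⟩
        · exact absurd h (by simp)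
        · exact (WithBot.coe_injective hba) ▸ hb⟩ : s))
      x.val x.2
  invFun y :=
    WithBot.recBotCoe (C := fun _ => ((insert (⊥ : WithBot A) ((fun a : A => (↑a : WithBot A)) '' s)) : Set (WithBot A)))
      ⟨⊥, Set.mem_insert _ _⟩
      (fun a => ⟨↑a.val, Set.mem_insert_iff.2 (Or.inr ⟨a.val, a.2, rfl⟩)⟩) y
  left_inv x := by
    obtain ⟨v, hv⟩ := x
    induction v using WithBot.recBotCoe with
    | bot => rfl
    | coe a => rfl
  right_inv y := by
    induction y using WithBot.recBotCoe with
    | bot => rfl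
    | coe a => rfl
  map_rel_iff' {x y} := by
    obtain ⟨v, hv⟩ := x
    obtain ⟨w, hw⟩ := y
    induction v using WithBot.recBotCoe with
    | bot =>
      induction w using WithBot.recBotCoe with
      | bot =>
        constructor
        · intro _
          exact Subtype.mk_le_mk.2 le_rfl
        · intro _
          exact le_rfl
      | coe b =>
        constructor
        · intro _
          exact Subtype.mk_le_mk.2 bot_le
        · intro _
          exact bot_le
    | coe a =>
      induction w using WithBot.recBotCoe with
      | bot =>
        constructor
        · intro h
          exact absurd h (WithBot.not_coe_le_bot _)
        · intro h
          exact absurd (Subtype.mk_le_mk.1 h) (WithBot.not_coe_le_bot _)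
      | coe b =>
        constructor
        · intro h
          have h' : ((⟨a, by
              rcases hv with h0 | ⟨c, hc, hca⟩
              · exact absurd h0 (by simp)
              · exact (WithBot.coe_injective hca) ▸ hc⟩ : s) : WithBot s) ≤
              ((⟨b, by
              rcases hw with h0 | ⟨c, hc, hca⟩
              · exact absurd h0 (by simp)
              · exact (WithBot.coe_injective hca) ▸ hc⟩ : s) : WithBot s) := h
          exact Subtype.mk_le_mk.2 (WithBot.coe_le_coe.2 (Subtype.mk_le_mk.1 (WithBot.coe_le_coe.1 h')))
        · intro h
          exact WithBot.coe_le_coe.2 (Subtype.mk_le_mk.2 (WithBot.coe_le_coe.1 (Subtype.mk_le_mk.1 h)))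

end Isos

theorem statement4
    (V : Ordinal → Type) [∀ γ : Ordinal, PartialOrder (V γ)]
    (seq : Ordinal → ℕ → Ordinal)
    (hV0 : ∀ x y : V 0, x = y) (hV0ne : Nonempty (V 0))
    (hchainfin : ∀ γ : Ordinal, γ.card ≤ Cardinal.aleph0 → ∀ x : V γ, {y : V γ | y ≤ x}.Finite)
    (hchainlin : ∀ γ : Ordinal, γ.card ≤ Cardinal.aleph0 →
      ∀ x y w : V γ, y ≤ x → w ≤ x → y ≤ w ∨ w ≤ y)
    (hseqmono : ∀ γ : Ordinal, γ.card ≤ Cardinal.aleph0 → Order.IsSuccLimit γ → StrictMono (seq γ))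
    (hseqsucc : ∀ γ : Ordinal, γ.card ≤ Cardinal.aleph0 → Order.IsSuccLimit γ →
      ∀ n : ℕ, ∃ δ : Ordinal, seq γ n = δ + 1)
    (hseqlt : ∀ γ : Ordinal, γ.card ≤ Cardinal.aleph0 → Order.IsSuccLimit γ → ∀ n : ℕ, seq γ n < γ)
    (hseqcof : ∀ γ : Ordinal, γ.card ≤ Cardinal.aleph0 → Order.IsSuccLimit γ →
      ∀ δ : Ordinal, δ < γ → ∃ n : ℕ, δ < seq γ n)
    (hsucc : ∀ γ : Ordinal, γ.card ≤ Cardinal.aleph0 → (γ = 0 ∨ ∃ δ : Ordinal, γ = δ + 1) →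
      Nonempty (V (γ + 1) ≃o WithBot (Σ _ : ℕ, V γ)))
    (hlimsucc : ∀ γ : Ordinal, γ.card ≤ Cardinal.aleph0 → Order.IsSuccLimit γ →
      Nonempty (V (γ + 1) ≃o WithBot (V γ)))
    (hlim : ∀ γ : Ordinal, γ.card ≤ Cardinal.aleph0 → Order.IsSuccLimit γ →
      Nonempty (V γ ≃o (Σ n : ℕ, V (seq γ n))))
    (n k : ℕ) (h1 : 1 ≤ k) (hkn : k ≤ n) :
    Nonempty (↥(derIter (Set.univ : Set (V (n : Ordinal))) (k : Ordinal))
      ≃o V ((n - k : ℕ) : Ordinal)) := by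

  classical
  -- basic cardinality facts about finite ordinals
  have hcard : ∀ m : ℕ, ((m : Ordinal)).card ≤ Cardinal.aleph0 := by
    intro m
    rw [Ordinal.card_nat]
    exact (Cardinal.nat_lt_aleph0 m).le
  have hzs : ∀ m : ℕ, ((m : Ordinal) = 0 ∨ ∃ δ : Ordinal, (m : Ordinal) = δ + 1) := by
    intro m
    cases m with
    | zero => exact Or.inl (by simp)
    | succ j => exact Or.inr ⟨(j : Ordinal), by exact_mod_cast Nat.cast_succ j⟩
  have hE : ∀ m : ℕ, Nonempty (V (((m + 1 : ℕ)) : Ordinal) ≃o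
      WithBot (Σ _ : ℕ, V (m : Ordinal))) := by
    intro m
    have h := hsucc (m : Ordinal) (hcard m) (hzs m)
    rw [show (((m + 1 : ℕ)) : Ordinal) = (m : Ordinal) + 1 from by exact_mod_cast Nat.cast_succ m]
    exact h
  have hVne : ∀ m : ℕ, Nonempty (V (m : Ordinal)) := by
    intro m
    induction m with
    | zero =>
      rw [Nat.cast_zero]
      exact hV0ne
    | succ j _ =>
      obtain ⟨e⟩ := hE j
      exact ⟨e.symm ⊥⟩
  have hfinV : ∀ m : ℕ, ∀ x : V (m : Ordinal), {y | y ≤ x}.Finite :=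
    fun m => hchainfin _ (hcard m)
  -- no vertex of V (m+1) is both minimal and terminal
  have no_min_term : ∀ m : ℕ, ∀ a : V (((m + 1 : ℕ)) : Ordinal), IsMin a →
      ¬ TerminalIn (Set.univ : Set (V (((m + 1 : ℕ)) : Ordinal))) a := by
    intro m a hmin hterm
    obtain ⟨e⟩ := hE m
    have hbot : e a = ⊥ := by
      by_contra hne
      have h1 : (⊥ : WithBot (Σ _ : ℕ, V (m : Ordinal))) < e a := bot_lt_iff_ne_bot.2 hne
      have h2 : e.symm ⊥ < a := by
        have := e.symm.lt_iff_lt.2 h1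
        simpa using this
      exact absurd (hmin h2.le) h2.not_ge
    have hterm' : TerminalIn (Set.univ : Set (WithBot (Σ _ : ℕ, V (m : Ordinal)))) (e a) :=
      (terminal_transfer (univIso e) ⟨a, Set.mem_univ a⟩).1 hterm
    rw [hbot] at hterm'
    exact bot_not_terminal (hfinV m) (hVne m) hterm'
  -- one derivation step: (F_{m+1})' = F_m
  have oneStep : ∀ m : ℕ, Nonempty
      (↥(derStep (Set.univ : Set (V (((m + 1 : ℕ)) : Ordinal)))) ≃o V (m : Ordinal)) := by
    intro m
    induction m with
    | zero =>
      obtain ⟨e⟩ := hE 0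
      have f := derStepIso (univIso e)
      have hsub : ∀ a b : V ((0 : ℕ) : Ordinal), a = b := by
        rw [Nat.cast_zero]
        exact hV0
      have hEq := derStep_withBot_sigma_subsingleton (Q := V ((0 : ℕ) : Ordinal)) hsub (hVne 0)
      refine ⟨(f.trans (OrderIso.setCongr _ _ hEq)).trans
        (uniqueIso ?_ hsub ⟨⊥, rfl⟩ (hVne 0).some)⟩
      rintro ⟨x, hx⟩ ⟨y, hy⟩
      exact Subtype.ext (hx.trans hy.symm)
    | succ j ih =>
      obtain ⟨g⟩ := ih
      obtain ⟨e⟩ := hE (j + 1)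
      have f := derStepIso (univIso e)
      have hEq := derStep_withBot_sigma (Q := V (((j + 1 : ℕ)) : Ordinal))
        (hfinV (j + 1)) (hVne (j + 1)) (no_min_term j)
      obtain ⟨e'⟩ := hE j
      exact ⟨((f.trans (OrderIso.setCongr _ _ hEq)).trans
        ((withBotSetIso _).trans
          ((OrderIso.withBotCongr (sigmaSetIso _)).trans
            (OrderIso.withBotCongr (sigmaCongr g))))).trans e'.symm⟩
  -- main induction on k
  have key : ∀ j : ℕ, j ≤ n → Nonempty (↥(derIter (Set.univ : Set (V (n : Ordinal)))
      (j : Ordinal)) ≃o V ((n - j : ℕ) : Ordinal)) := by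
    intro j
    induction j with
    | zero =>
      intro _
      have h0 : derIter (Set.univ : Set (V (n : Ordinal))) ((0 : ℕ) : Ordinal) = Set.univ := by
        rw [Nat.cast_zero]
        simp only [derIter]
        exact Ordinal.limitRecOn_zero _ _ _
      rw [h0, Nat.sub_zero]
      exact ⟨OrderIso.Set.univ⟩
    | succ j ih =>
      intro hle
      obtain ⟨g⟩ := ih (Nat.le_of_succ_le hle)
      have hstep : derIter (Set.univ : Set (V (n : Ordinal))) (((j + 1 : ℕ)) : Ordinal) =
          derStep (derIter (Set.univ : Set (V (n : Ordinal))) (j : Ordinal)) := by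
        have hc : (((j + 1 : ℕ)) : Ordinal) = Order.succ ((j : ℕ) : Ordinal) := by
          rw [show (((j + 1 : ℕ)) : Ordinal) = (j : Ordinal) + 1 from by
            exact_mod_cast Nat.cast_succ j]
          exact Ordinal.add_one_eq_succ _
        simp only [derIter]
        rw [hc, Ordinal.limitRecOn_succ]
      have f : ↥(derIter (Set.univ : Set (V (n : Ordinal))) (j : Ordinal)) ≃o
          ↥(Set.univ : Set (V ((n - j : ℕ) : Ordinal))) :=
        g.trans OrderIso.Set.univ.symm
      have f2 := derStepIso f
      have hm : n - j = (n - (j + 1)) + 1 := by omega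
      rw [hstep]
      rw [hm] at f2
      obtain ⟨h3⟩ := oneStep (n - (j + 1))
      exact ⟨f2.trans h3⟩
  exact key k hkn


end Paper
end
end

section
/- For every countable ordinal α, the derived forest of order α of F_{α+1} is isomorphic to F_1, and the derived forest of order α+1 of F_{α+1} is isomorphic to F_0: (F_{α+1})^α = F_1 and (F_{α+1})^{α+1} = F_0. -/
open Set Filter Topology

noncomputable section

namespace Paper

set_option linter.unusedSectionVars false

section Aux
variable {P : Type*} [PartialOrder P] {S : Set P}

@[simp] lemma derIter_zero (S : Set P) : derIter S 0 = S := Ordinal.limitRecOn_zero ..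

lemma derIter_succ (S : Set P) (β : Ordinal) : derIter S (β + 1) = derStep (derIter S β) := by
  have : β + 1 = Order.succ β := rfl
  rw [this]; exact Ordinal.limitRecOn_succ ..

lemma derIter_limit (S : Set P) {β : Ordinal} (h : Order.IsSuccLimit β) :
    derIter S β = ⋂ (γ : Ordinal), ⋂ (_ : γ < β), derIter S γ :=
  Ordinal.limitRecOn_limit _ _ _ _ h

lemma derStep_subset (S : Set P) : derStep S ⊆ S := diff_subset

lemma derIter_antitone {γ β : Ordinal} (h : γ ≤ β) : derIter S β ⊆ derIter S γ := by
  induction β using Ordinal.induction with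
  | h β ih =>
    rcases Ordinal.zero_or_succ_or_isSuccLimit β with h0 | ⟨δ, rfl⟩ | hl
    · subst h0; rw [nonpos_iff_eq_zero.mp h]
    · rcases eq_or_lt_of_le h with rfl | hlt
      · rfl
      · rw [show Order.succ δ = δ + 1 from rfl, derIter_succ]
        exact (derStep_subset _).trans (ih δ (Order.lt_succ δ) (Order.le_of_lt_succ hlt))
    · rcases eq_or_lt_of_le h with rfl | hlt
      · rfl
      · rw [derIter_limit S hl]
        exact fun x hx => by
          simpa using (mem_iInter₂.mp hx) γ hlt

lemma derIter_fixed {β₀ : Ordinal} (hfix : derStep (derIter S β₀) = derIter S β₀)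
    {β : Ordinal} (h : β₀ ≤ β) : derIter S β = derIter S β₀ := by
  induction β using Ordinal.induction with
  | h β ih =>
    rcases eq_or_lt_of_le h with rfl | hlt
    · rfl
    rcases Ordinal.zero_or_succ_or_isSuccLimit β with h0 | ⟨δ, rfl⟩ | hl
    · subst h0; exact absurd hlt (zero_le.not_gt)
    · rw [show Order.succ δ = δ + 1 from rfl, derIter_succ,
        ih δ (Order.lt_succ δ) (Order.le_of_lt_succ hlt), hfix]
    · rw [derIter_limit S hl]
      apply subset_antisymm
      · intro x hx
        have := mem_iInter₂.mp hx β₀ hlt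
        exact this
      · intro x hx
        refine mem_iInter₂.mpr fun γ hγ => ?_
        rcases le_or_gt β₀ γ with h1 | h1
        · rw [ih γ hγ h1]; exact hx
        · exact derIter_antitone h1.le hx

lemma min_mem_derStep {b : P} (hmin : ∀ x, b ≤ x) (hb : b ∈ S) : b ∈ derStep S := by
  refine ⟨hb, fun hdel => ?_⟩
  obtain ⟨-, u, ⟨-, -, hub, -⟩, -⟩ := hdel
  exact absurd (hmin u) (not_le_of_gt hub)

lemma min_mem_derIter {b : P} (hmin : ∀ x, b ≤ x) (hb : b ∈ S) (β : Ordinal) :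
    b ∈ derIter S β := by
  induction β using Ordinal.induction with
  | h β ih =>
    rcases Ordinal.zero_or_succ_or_isSuccLimit β with h0 | ⟨δ, rfl⟩ | hl
    · subst h0; simpa
    · rw [show Order.succ δ = δ + 1 from rfl, derIter_succ]
      exact min_mem_derStep hmin (ih δ (Order.lt_succ δ))
    · rw [derIter_limit S hl]; exact mem_iInter₂.mpr fun γ hγ => ih γ hγ

lemma derStep_singleton (b : P) : derStep {b} = ({b} : Set P) := by
  apply subset_antisymm (derStep_subset _)
  rintro x rfl
  refine ⟨rfl, fun hdel => ?_⟩
  obtain ⟨-, u, ⟨hu, -, hub, -⟩, -⟩ := hdel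
  rw [mem_singleton_iff] at hu
  exact absurd hub (hu ▸ lt_irrefl x)

lemma exists_upnbr (hchain : ∀ x : P, {y : P | y ≤ x}.Finite) {x y : P}
    (hx : x ∈ S) (hy : y ∈ S) (hxy : x < y) : ∃ q, UpNbrIn S x q := by
  have hfin : ({z ∈ S | x < z ∧ z ≤ y}).Finite := (hchain y).subset (fun z hz => hz.2.2)
  obtain ⟨q, hq, hmin⟩ := hfin.exists_minimal ⟨y, hy, hxy, le_refl y⟩
  refine ⟨q, hx, hq.1, hq.2.1, fun z hz ⟨hxz, hzq⟩ => ?_⟩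
  have : z ∈ {z ∈ S | x < z ∧ z ≤ y} := ⟨hz, hxz, hzq.le.trans hq.2.2⟩
  exact hzq.ne' (le_antisymm (hmin this hzq.le) hzq.le)

lemma terminal_iff (hchain : ∀ x : P, {y : P | y ≤ x}.Finite) {x : P} :
    TerminalIn S x ↔ x ∈ S ∧ ∀ y ∈ S, ¬ x < y := by
  constructor
  · rintro ⟨hx, hterm⟩
    refine ⟨hx, fun y hy hxy => ?_⟩
    obtain ⟨q, hq⟩ := exists_upnbr hchain hx hy hxy
    exact hterm q hq
  · rintro ⟨hx, h⟩
    exact ⟨hx, fun y ⟨_, hy, hxy, _⟩ => h y hy hxy⟩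

section Transport
variable {Q : Type*} [PartialOrder Q] (e : P ≃o Q)

lemma upNbrIn_image {S : Set P} {x y : P} :
    UpNbrIn (e '' S) (e x) (e y) ↔ UpNbrIn S x y := by
  constructor
  · rintro ⟨hx, hy, hxy, hbet⟩
    refine ⟨by simpa using hx, by simpa using hy, by simpa using hxy, fun z hz ⟨h1, h2⟩ =>
      hbet (e z) ⟨z, hz, rfl⟩ ⟨by simpa using h1, by simpa using h2⟩⟩
  · rintro ⟨hx, hy, hxy, hbet⟩
    refine ⟨⟨x, hx, rfl⟩, ⟨y, hy, rfl⟩, by simpa using hxy, ?_⟩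
    rintro z ⟨w, hw, rfl⟩ ⟨h1, h2⟩
    exact hbet w hw ⟨by simpa using h1, by simpa using h2⟩

lemma terminalIn_image {S : Set P} {x : P} :
    TerminalIn (e '' S) (e x) ↔ TerminalIn S x := by
  constructor
  · rintro ⟨hx, hterm⟩
    exact ⟨by simpa using hx, fun y hy => hterm (e y) ((upNbrIn_image e).mpr hy)⟩
  · rintro ⟨hx, hterm⟩
    refine ⟨⟨x, hx, rfl⟩, fun y hy => ?_⟩
    have : y = e (e.symm y) := by simp
    rw [this] at hy
    exact hterm (e.symm y) ((upNbrIn_image e).mp hy)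

lemma derStep_image (S : Set P) : derStep (e '' S) = e '' derStep S := by
  ext y
  have hy : y = e (e.symm y) := by simp
  rw [hy]
  generalize e.symm y = x
  constructor
  · rintro ⟨hx, hdel⟩
    refine ⟨x, ⟨by simpa using hx, fun hdel' => hdel ?_⟩, rfl⟩
    obtain ⟨ht, u, hu, hinf⟩ := hdel'
    refine ⟨(terminalIn_image e).mpr ht, e u, (upNbrIn_image e).mpr hu, ?_⟩
    have : {y | UpNbrIn (e '' S) (e u) y ∧ TerminalIn (e '' S) y}
        = e '' {y | UpNbrIn S u y ∧ TerminalIn S y} := by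
      ext z
      have hz : z = e (e.symm z) := by simp
      constructor
      · intro h
        rw [hz] at h
        exact ⟨e.symm z, ⟨(upNbrIn_image e).mp h.1, (terminalIn_image e).mp h.2⟩, by simp⟩
      · rintro ⟨w, hw, rfl⟩
        exact ⟨(upNbrIn_image e).mpr hw.1, (terminalIn_image e).mpr hw.2⟩
    rw [this]
    exact hinf.image (e.injective.injOn)
  · rintro ⟨x', ⟨hx', hdel'⟩, hex⟩
    obtain rfl : x' = x := e.injective hex
    refine ⟨⟨x', hx', rfl⟩, fun hdel => hdel' ?_⟩
    obtain ⟨ht, u, hu, hinf⟩ := hdel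
    have hu' : u = e (e.symm u) := by simp
    rw [hu'] at hu hinf
    refine ⟨(terminalIn_image e).mp ht, e.symm u, (upNbrIn_image e).mp hu, ?_⟩
    have : {y | UpNbrIn S (e.symm u) y ∧ TerminalIn S y}
        = e.symm '' {y | UpNbrIn (e '' S) (e (e.symm u)) y ∧ TerminalIn (e '' S) y} := by
      ext z
      constructor
      · intro h
        exact ⟨e z, ⟨(upNbrIn_image e).mpr h.1, (terminalIn_image e).mpr h.2⟩, by simp⟩
      · rintro ⟨w, hw, rfl⟩
        have hw2 : w = e (e.symm w) := by simp
        rw [hw2] at hw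
        exact ⟨(upNbrIn_image e).mp hw.1, (terminalIn_image e).mp hw.2⟩
    rw [this]
    exact hinf.image (e.symm.injective.injOn)

lemma derIter_image (S : Set P) (β : Ordinal) :
    derIter (e '' S) β = e '' derIter S β := by
  induction β using Ordinal.induction with
  | h β ih =>
    rcases Ordinal.zero_or_succ_or_isSuccLimit β with h0 | ⟨δ, rfl⟩ | hl
    · subst h0; simp
    · rw [show Order.succ δ = δ + 1 from rfl, derIter_succ, derIter_succ,
        ih δ (Order.lt_succ δ), derStep_image]
    · rw [derIter_limit _ hl, derIter_limit _ hl]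
      rw [Set.image_iInter₂ (f := (e : P → Q)) e.bijective]
      exact iInter_congr fun γ => iInter_congr fun h => ih γ h
end Transport
section Fam
variable {P : ℕ → Type} [∀ n, PartialOrder (P n)]

local notation "W" => WithBot ((n : ℕ) × P n)

def famSet (S : ∀ n, Set (P n)) : Set (WithBot ((n : ℕ) × P n)) :=
  insert ⊥ {x | ∃ n p, p ∈ S n ∧ x = (↑(⟨n, p⟩ : (n : ℕ) × P n) : WithBot ((n : ℕ) × P n))}

lemma coe_mem_famSet {S : ∀ n, Set (P n)} {n : ℕ} {p : P n} :
    (↑(⟨n, p⟩ : (n : ℕ) × P n) : W) ∈ famSet S ↔ p ∈ S n := by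
  constructor
  · rintro (h | ⟨m, q, hq, heq⟩)
    · exact absurd h (by simp)
    · obtain ⟨rfl, h2⟩ := Sigma.mk.inj_iff.mp (WithBot.coe_inj.mp heq)
      rw [eq_of_heq h2]; exact hq
  · intro h; exact Or.inr ⟨n, p, h, rfl⟩

lemma bot_mem_famSet (S : ∀ n, Set (P n)) : (⊥ : W) ∈ famSet S := Or.inl rfl

lemma famSet_univ : famSet (fun n => (univ : Set (P n))) = (univ : Set W) := by
  apply eq_univ_of_forall
  intro x
  cases x with
  | bot => exact bot_mem_famSet _
  | coe a => obtain ⟨n, p⟩ := a; exact coe_mem_famSet.mpr (mem_univ _)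

lemma mk_lt_mk_iff {n : ℕ} {p q : P n} :
    (⟨n, p⟩ : (n : ℕ) × P n) < ⟨n, q⟩ ↔ p < q := by
  rw [lt_iff_le_and_ne, lt_iff_le_and_ne, Sigma.mk_le_mk_iff]
  simp [Sigma.ext_iff]

lemma index_eq_of_le {n m : ℕ} {p : P n} {q : P m}
    (h : (⟨n, p⟩ : (n : ℕ) × P n) ≤ ⟨m, q⟩) : n = m := by
  obtain ⟨h1, -⟩ := Sigma.le_def.mp h
  exact h1

lemma le_of_mk_le_mk {n : ℕ} {p q : P n}
    (h : (⟨n, p⟩ : (n : ℕ) × P n) ≤ ⟨n, q⟩) : p ≤ q := Sigma.mk_le_mk_iff.mp h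
end Fam
section Fam2
variable {P : ℕ → Type} [∀ n, PartialOrder (P n)]

local notation "W" => WithBot ((n : ℕ) × P n)

variable {S : ∀ n, Set (P n)} {b : ∀ n, P n}

lemma lt_coe_structure {n : ℕ} {p : P n} {z : W}
    (h : (↑(⟨n, p⟩ : (n : ℕ) × P n) : W) < z) : ∃ q : P n, z = ↑(⟨n, q⟩ : (n : ℕ) × P n) ∧ p < q := by
  cases z with
  | bot => exact absurd h (by simp)
  | coe a =>
    obtain ⟨m, q⟩ := a
    rw [WithBot.coe_lt_coe] at h
    obtain rfl := index_eq_of_le h.le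
    exact ⟨q, rfl, mk_lt_mk_iff.mp h⟩

lemma upNbrIn_famSet_coe_iff {n : ℕ} {u p : P n} :
    UpNbrIn (famSet S) (↑(⟨n, u⟩ : (n : ℕ) × P n) : W) ↑(⟨n, p⟩ : (n : ℕ) × P n)
      ↔ UpNbrIn (S n) u p := by
  constructor
  · rintro ⟨hu, hp, hlt, hbet⟩
    refine ⟨coe_mem_famSet.mp hu, coe_mem_famSet.mp hp,
      mk_lt_mk_iff.mp (WithBot.coe_lt_coe.mp hlt), fun z hz ⟨h1, h2⟩ => ?_⟩
    exact hbet ↑(⟨n, z⟩ : (n : ℕ) × P n) (coe_mem_famSet.mpr hz)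
      ⟨WithBot.coe_lt_coe.mpr (mk_lt_mk_iff.mpr h1), WithBot.coe_lt_coe.mpr (mk_lt_mk_iff.mpr h2)⟩
  · rintro ⟨hu, hp, hlt, hbet⟩
    refine ⟨coe_mem_famSet.mpr hu, coe_mem_famSet.mpr hp,
      WithBot.coe_lt_coe.mpr (mk_lt_mk_iff.mpr hlt), fun z hz ⟨h1, h2⟩ => ?_⟩
    obtain ⟨q, rfl, hq1⟩ := lt_coe_structure h1
    rw [WithBot.coe_lt_coe] at h2
    exact hbet q (coe_mem_famSet.mp hz) ⟨hq1, mk_lt_mk_iff.mp h2⟩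

lemma upNbrIn_famSet_coe_structure {n : ℕ} {u : P n} {y : W}
    (h : UpNbrIn (famSet S) (↑(⟨n, u⟩ : (n : ℕ) × P n) : W) y) :
    ∃ p : P n, y = ↑(⟨n, p⟩ : (n : ℕ) × P n) ∧ UpNbrIn (S n) u p := by
  obtain ⟨q, rfl, -⟩ := lt_coe_structure h.2.2.1
  exact ⟨q, rfl, upNbrIn_famSet_coe_iff.mp h⟩

lemma terminalIn_famSet_coe_iff {n : ℕ} {p : P n} :
    TerminalIn (famSet S) (↑(⟨n, p⟩ : (n : ℕ) × P n) : W) ↔ TerminalIn (S n) p := by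
  constructor
  · rintro ⟨hp, hterm⟩
    exact ⟨coe_mem_famSet.mp hp, fun y hy => hterm _ (upNbrIn_famSet_coe_iff.mpr hy)⟩
  · rintro ⟨hp, hterm⟩
    refine ⟨coe_mem_famSet.mpr hp, fun y hy => ?_⟩
    obtain ⟨q, rfl, hq⟩ := upNbrIn_famSet_coe_structure hy
    exact hterm q hq

lemma upNbrIn_famSet_bot_iff (hbmin : ∀ n (x : P n), b n ≤ x) (hbS : ∀ n, b n ∈ S n) {y : W} :
    UpNbrIn (famSet S) ⊥ y ↔ ∃ n, y = ↑(⟨n, b n⟩ : (n : ℕ) × P n) := by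
  constructor
  · rintro ⟨-, hy, hlt, hbet⟩
    cases y with
    | bot => exact absurd hlt (by simp)
    | coe a =>
      obtain ⟨m, q⟩ := a
      refine ⟨m, ?_⟩
      have hq : q ∈ S m := coe_mem_famSet.mp hy
      by_contra hne
      have hqb : q ≠ b m := by
        intro h; exact hne (by rw [h])
      have : b m < q := lt_of_le_of_ne (hbmin m q) (Ne.symm hqb)
      exact hbet ↑(⟨m, b m⟩ : (n : ℕ) × P n) (coe_mem_famSet.mpr (hbS m))
        ⟨WithBot.bot_lt_coe _, WithBot.coe_lt_coe.mpr (mk_lt_mk_iff.mpr this)⟩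
  · rintro ⟨n, rfl⟩
    refine ⟨bot_mem_famSet S, coe_mem_famSet.mpr (hbS n), WithBot.bot_lt_coe _,
      fun z hz ⟨h1, h2⟩ => ?_⟩
    cases z with
    | bot => exact absurd h1 (by simp)
    | coe a =>
      obtain ⟨m, q⟩ := a
      rw [WithBot.coe_lt_coe] at h2
      obtain rfl := index_eq_of_le h2.le
      exact absurd (mk_lt_mk_iff.mp h2) (not_lt_of_ge (hbmin _ q))

lemma not_terminalIn_famSet_bot (hbmin : ∀ n (x : P n), b n ≤ x) (hbS : ∀ n, b n ∈ S n) :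
    ¬ TerminalIn (famSet S) (⊥ : W) := by
  rintro ⟨-, hterm⟩
  exact hterm _ ((upNbrIn_famSet_bot_iff hbmin hbS).mpr ⟨0, rfl⟩)


end Fam2
section Fam3
variable {P : ℕ → Type} [∀ n, PartialOrder (P n)]

local notation "W" => WithBot ((n : ℕ) × P n)

variable {S : ∀ n, Set (P n)} {b : ∀ n, P n}

lemma terminal_bot_copy_iff (hchain : ∀ n (x : P n), {y : P n | y ≤ x}.Finite)
    (hbmin : ∀ n (x : P n), b n ≤ x) (hbS : ∀ n, b n ∈ S n) {n : ℕ} :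
    TerminalIn (S n) (b n) ↔ S n ⊆ {b n} := by
  rw [terminal_iff (hchain n)]
  constructor
  · rintro ⟨-, h⟩ x hx
    exact ((hbmin n x).eq_or_lt.resolve_right (h x hx)).symm
  · intro h
    exact ⟨hbS n, fun y hy hlt => absurd (h hy) (by rintro rfl; exact lt_irrefl _ hlt)⟩

lemma terminal_ups_coe_eq {n : ℕ} (u : P n) :
    {y : W | UpNbrIn (famSet S) (↑(⟨n, u⟩ : (n : ℕ) × P n) : W) y ∧ TerminalIn (famSet S) y}
      = (fun q : P n => (↑(⟨n, q⟩ : (n : ℕ) × P n) : W)) ''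
        {q | UpNbrIn (S n) u q ∧ TerminalIn (S n) q} := by
  ext y
  constructor
  · rintro ⟨h1, h2⟩
    obtain ⟨q, rfl, hq⟩ := upNbrIn_famSet_coe_structure h1
    exact ⟨q, ⟨hq, terminalIn_famSet_coe_iff.mp h2⟩, rfl⟩
  · rintro ⟨q, ⟨hq1, hq2⟩, rfl⟩
    exact ⟨upNbrIn_famSet_coe_iff.mpr hq1, terminalIn_famSet_coe_iff.mpr hq2⟩

lemma coe_mk_injective {n : ℕ} :
    Function.Injective (fun q : P n => (↑(⟨n, q⟩ : (n : ℕ) × P n) : W)) := by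
  intro a c h
  simpa [Sigma.ext_iff] using WithBot.coe_inj.mp h

lemma terminal_ups_bot_eq (hchain : ∀ n (x : P n), {y : P n | y ≤ x}.Finite)
    (hbmin : ∀ n (x : P n), b n ≤ x) (hbS : ∀ n, b n ∈ S n) :
    {y : W | UpNbrIn (famSet S) ⊥ y ∧ TerminalIn (famSet S) y}
      = (fun n : ℕ => (↑(⟨n, b n⟩ : (n : ℕ) × P n) : W)) '' {n | S n ⊆ {b n}} := by
  ext y
  constructor
  · rintro ⟨h1, h2⟩
    obtain ⟨n, rfl⟩ := (upNbrIn_famSet_bot_iff hbmin hbS).mp h1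
    exact ⟨n, (terminal_bot_copy_iff hchain hbmin hbS).mp (terminalIn_famSet_coe_iff.mp h2), rfl⟩
  · rintro ⟨n, hn, rfl⟩
    exact ⟨(upNbrIn_famSet_bot_iff hbmin hbS).mpr ⟨n, rfl⟩,
      terminalIn_famSet_coe_iff.mpr ((terminal_bot_copy_iff hchain hbmin hbS).mpr hn)⟩

lemma derStep_famSet (hchain : ∀ n (x : P n), {y : P n | y ≤ x}.Finite)
    (hbmin : ∀ n (x : P n), b n ≤ x) (hbS : ∀ n, b n ∈ S n)
    (hfin : {n | S n ⊆ {b n}}.Finite) :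
    derStep (famSet S) = famSet (fun n => derStep (S n)) := by
  ext x
  cases x with
  | bot =>
    simp only [derStep]
    constructor
    · intro _; exact bot_mem_famSet _
    · intro _
      exact ⟨bot_mem_famSet S, fun ⟨ht, _⟩ => not_terminalIn_famSet_bot hbmin hbS ht⟩
  | coe a =>
    obtain ⟨n, p⟩ := a
    simp only [derStep, mem_diff, coe_mem_famSet, mem_setOf_eq]
    constructor
    · rintro ⟨hp, hdel⟩
      refine ⟨hp, fun ⟨ht, u, hu, hinf⟩ => hdel ?_⟩
      refine ⟨terminalIn_famSet_coe_iff.mpr ht, ↑(⟨n, u⟩ : (n : ℕ) × P n),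
        upNbrIn_famSet_coe_iff.mpr hu, ?_⟩
      rw [terminal_ups_coe_eq]
      exact hinf.image coe_mk_injective.injOn
    · rintro ⟨hp, hdel⟩
      refine ⟨hp, fun ⟨ht, u, hu, hinf⟩ => hdel ?_⟩
      have ht' : TerminalIn (S n) p := terminalIn_famSet_coe_iff.mp ht
      cases u with
      | bot =>
        rw [terminal_ups_bot_eq hchain hbmin hbS] at hinf
        exact absurd (hfin.image _) hinf
      | coe c =>
        obtain ⟨m, w⟩ := c
        have hlt := hu.2.2.1
        rw [WithBot.coe_lt_coe] at hlt
        obtain rfl := index_eq_of_le hlt.le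
        refine ⟨ht', w, upNbrIn_famSet_coe_iff.mp hu, ?_⟩
        rw [terminal_ups_coe_eq] at hinf
        exact (Set.infinite_image_iff coe_mk_injective.injOn).mp hinf
end Fam3
section Fam4
variable {P : ℕ → Type} [∀ n, PartialOrder (P n)]

local notation "W" => WithBot ((n : ℕ) × P n)

variable {b : ∀ n, P n}

lemma derIter_famSet (hchain : ∀ n (x : P n), {y : P n | y ≤ x}.Finite)
    (hbmin : ∀ n (x : P n), b n ≤ x) (σ : ℕ → Ordinal)
    (hσ2 : ∀ n β, β < σ n → derIter (univ : Set (P n)) β ≠ {b n})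
    (Λ : Ordinal) (HF : ∀ β < Λ, {n | σ n ≤ β}.Finite) :
    ∀ β ≤ Λ, derIter (univ : Set W) β = famSet (fun n => derIter (univ : Set (P n)) β) := by
  intro β
  induction β using Ordinal.induction with
  | h β ih =>
    intro hβ
    rcases Ordinal.zero_or_succ_or_isSuccLimit β with h0 | ⟨δ, rfl⟩ | hl
    · subst h0; rw [derIter_zero]; simp only [derIter_zero]; exact famSet_univ.symm
    · have hδΛ : δ < Λ := lt_of_lt_of_le (Order.lt_succ δ) hβ
      rw [show Order.succ δ = δ + 1 from rfl, derIter_succ,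
        ih δ (Order.lt_succ δ) hδΛ.le]
      have hbS : ∀ n, b n ∈ derIter (univ : Set (P n)) δ :=
        fun n => min_mem_derIter (hbmin n) (mem_univ _) δ
      have hfin : {n | derIter (univ : Set (P n)) δ ⊆ {b n}}.Finite := by
        refine (HF δ hδΛ).subset fun n hn => ?_
        by_contra hlt
        exact hσ2 n δ (not_le.mp hlt) (subset_antisymm hn (by simpa using hbS n))
      have := derStep_famSet (S := fun n => derIter (univ : Set (P n)) δ) hchain hbmin hbS hfin
      rw [this]
      have harg : (fun n => derStep (derIter (univ : Set (P n)) δ))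
          = fun n => derIter (univ : Set (P n)) (δ + 1) :=
        funext fun n => (derIter_succ _ _).symm
      exact congrArg famSet harg
    · rw [derIter_limit _ hl]
      have : ∀ γ, γ < β → derIter (univ : Set W) γ
          = famSet (fun n => derIter (univ : Set (P n)) γ) :=
        fun γ hγ => ih γ hγ (hγ.le.trans hβ)
      ext x
      simp only [mem_iInter]
      cases x with
      | bot =>
        constructor
        · intro _; exact bot_mem_famSet _
        · intro _ γ hγ; rw [this γ hγ]; exact bot_mem_famSet _
      | coe a =>
        obtain ⟨n, p⟩ := a
        rw [coe_mem_famSet, derIter_limit _ hl]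
        simp only [mem_iInter]
        constructor
        · intro h γ hγ
          have := (this γ hγ) ▸ h γ hγ
          exact coe_mem_famSet.mp this
        · intro h γ hγ
          rw [this γ hγ]
          exact coe_mem_famSet.mpr (h γ hγ)

lemma derIter_copy_fixed (hbmin : ∀ n (x : P n), b n ≤ x) (σ : ℕ → Ordinal)
    (hσ1 : ∀ n, derIter (univ : Set (P n)) (σ n) = {b n})
    {n : ℕ} {β : Ordinal} (h : σ n ≤ β) : derIter (univ : Set (P n)) β = {b n} := by
  have hfix : derStep (derIter (univ : Set (P n)) (σ n)) = derIter (univ : Set (P n)) (σ n) := by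
    rw [hσ1]; exact derStep_singleton _
  rw [derIter_fixed hfix h, hσ1]

lemma famSet_singletons :
    famSet (fun n => ({b n} : Set (P n)))
      = insert (⊥ : W) (range fun n => (↑(⟨n, b n⟩ : (n : ℕ) × P n) : W)) := by
  ext x
  cases x with
  | bot => simp [bot_mem_famSet]
  | coe a =>
    obtain ⟨n, p⟩ := a
    rw [coe_mem_famSet]
    constructor
    · rintro rfl
      exact Or.inr ⟨n, rfl⟩
    · rintro (h | ⟨m, hm⟩)
      · exact absurd h (by simp)
      · obtain ⟨rfl, h2⟩ := Sigma.mk.inj_iff.mp (WithBot.coe_inj.mp hm.symm)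
        rw [eq_of_heq h2]; rfl

lemma inj_mk_b : Function.Injective (fun n : ℕ => (↑(⟨n, b n⟩ : (n : ℕ) × P n) : W)) := by
  intro a c h
  exact (Sigma.mk.inj_iff.mp (WithBot.coe_inj.mp h)).1

lemma derIter_famSet_top (hchain : ∀ n (x : P n), {y : P n | y ≤ x}.Finite)
    (hbmin : ∀ n (x : P n), b n ≤ x) (σ : ℕ → Ordinal)
    (hσ1 : ∀ n, derIter (univ : Set (P n)) (σ n) = {b n})
    (hσ2 : ∀ n β, β < σ n → derIter (univ : Set (P n)) β ≠ {b n})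
    (Λ : Ordinal) (hΛ : ∀ n, σ n ≤ Λ) (HF : ∀ β < Λ, {n | σ n ≤ β}.Finite) :
    derIter (univ : Set W) Λ
      = insert (⊥ : W) (range fun n => (↑(⟨n, b n⟩ : (n : ℕ) × P n) : W)) := by
  rw [derIter_famSet hchain hbmin σ hσ2 Λ HF Λ le_rfl, ← famSet_singletons]
  have harg : (fun n => derIter (univ : Set (P n)) Λ) = fun n => ({b n} : Set (P n)) :=
    funext fun n => derIter_copy_fixed hbmin σ hσ1 (hΛ n)
  exact congrArg famSet harg

lemma derStep_final (hchain : ∀ n (x : P n), {y : P n | y ≤ x}.Finite)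
    (hbmin : ∀ n (x : P n), b n ≤ x) :
    derStep (insert (⊥ : W) (range fun n => (↑(⟨n, b n⟩ : (n : ℕ) × P n) : W)))
      = ({⊥} : Set W) := by
  rw [← famSet_singletons]
  have hbS : ∀ n, b n ∈ ({b n} : Set (P n)) := fun n => rfl
  ext x
  cases x with
  | bot =>
    constructor
    · intro _; exact rfl
    · intro _
      exact ⟨bot_mem_famSet _, fun ⟨ht, _⟩ => not_terminalIn_famSet_bot hbmin hbS ht⟩
  | coe a =>
    obtain ⟨n, p⟩ := a
    constructor
    · rintro ⟨hmem, hdel⟩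
      obtain rfl : p = b n := coe_mem_famSet.mp hmem
      exfalso
      apply hdel
      have hterm : TerminalIn ({b n} : Set (P n)) (b n) := by
        refine ⟨rfl, fun y hy => ?_⟩
        obtain ⟨-, hy2, hlt, -⟩ := hy
        rw [mem_singleton_iff] at hy2
        subst hy2
        exact lt_irrefl _ hlt
      refine ⟨terminalIn_famSet_coe_iff.mpr hterm,
        ⊥, (upNbrIn_famSet_bot_iff hbmin hbS).mpr ⟨n, rfl⟩, ?_⟩
      · rw [terminal_ups_bot_eq hchain hbmin hbS]
        have : {m : ℕ | ({b m} : Set (P m)) ⊆ {b m}} = univ := by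
          apply eq_univ_of_forall; intro m; exact Set.Subset.rfl
        rw [this, image_univ]
        exact Set.infinite_range_of_injective inj_mk_b
    · intro h
      exact absurd h (by simp)
end Fam4
section Isos
variable {Q R : Type*} [PartialOrder Q] [PartialOrder R]

def isoImage (e : Q ≃o R) (A : Set Q) : A ≃o (e '' A : Set R) where
  toEquiv := e.toEquiv.image A
  map_rel_iff' := by
    intro a c
    simp only [Equiv.image, Equiv.coe_fn_mk, Subtype.mk_le_mk]
    exact e.le_iff_le

def singIso (q : Q) (hR : ∀ x y : R, x = y) (r0 : R) : (({q} : Set Q)) ≃o R where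
  toFun := fun _ => r0
  invFun := fun _ => ⟨q, rfl⟩
  left_inv := fun x => Subtype.ext x.2.symm
  right_inv := fun r => hR r0 r
  map_rel_iff' := by
    intro a c
    refine iff_of_true (le_of_eq (hR r0 r0)) ?_
    have : a.val = c.val := a.2.trans c.2.symm
    exact le_of_eq (Subtype.ext this)

variable {P : ℕ → Type} [∀ n, PartialOrder (P n)]

def topFun (b : ∀ n, P n) (R : Type*) [PartialOrder R] :
    (WithBot ((_ : ℕ) × R)) →
      ↥(insert (⊥ : WithBot ((n : ℕ) × P n))
        (range fun n => (↑(⟨n, b n⟩ : (n : ℕ) × P n) : WithBot ((n : ℕ) × P n)))) :=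
  WithBot.recBotCoe ⟨⊥, mem_insert _ _⟩
    (fun a => ⟨↑(⟨a.1, b a.1⟩ : (n : ℕ) × P n), mem_insert_iff.mpr (Or.inr ⟨a.1, rfl⟩)⟩)

lemma topFun_bijective (b : ∀ n, P n) (hR : ∀ x y : R, x = y) (r0 : R) :
    Function.Bijective (topFun b R (P := P)) := by
  constructor
  · intro x y h
    cases x with
    | bot =>
      cases y with
      | bot => rfl
      | coe c =>
        exfalso
        have := congrArg Subtype.val h
        simp only [topFun, WithBot.recBotCoe] at this
        exact absurd this (by simp)
    | coe a =>
      cases y with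
      | bot =>
        exfalso
        have := congrArg Subtype.val h
        simp only [topFun, WithBot.recBotCoe] at this
        exact absurd this (by simp)
      | coe c =>
        have := congrArg Subtype.val h
        simp only [topFun, WithBot.recBotCoe] at this
        have h2 : (⟨a.fst, b a.fst⟩ : (n : ℕ) × P n) = ⟨c.fst, b c.fst⟩ :=
          WithBot.coe_injective this
        have h1 : a.1 = c.1 := (Sigma.mk.inj_iff.mp h2).1
        rw [WithBot.coe_inj]
        exact Sigma.ext h1 (heq_of_eq (hR _ _))
  · rintro ⟨x, hx⟩
    rcases mem_insert_iff.mp hx with rfl | ⟨n, hn⟩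
    · exact ⟨⊥, rfl⟩
    · refine ⟨↑(⟨n, r0⟩ : (_ : ℕ) × R), Subtype.ext ?_⟩
      simp only [topFun, WithBot.recBotCoe]
      exact hn

def topIso (b : ∀ n, P n) (hR : ∀ x y : R, x = y) (r0 : R) :
    (WithBot ((_ : ℕ) × R)) ≃o
      ↥(insert (⊥ : WithBot ((n : ℕ) × P n))
        (range fun n => (↑(⟨n, b n⟩ : (n : ℕ) × P n) : WithBot ((n : ℕ) × P n)))) where
  toEquiv := Equiv.ofBijective _ (topFun_bijective b hR r0)
  map_rel_iff' := by
    intro a c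
    show topFun b R (P := P) a ≤ topFun b R c ↔ a ≤ c
    rw [Subtype.coe_le_coe.symm]
    cases a with
    | bot =>
      simp only [topFun, WithBot.recBotCoe]
      exact iff_of_true bot_le bot_le
    | coe a =>
      cases c with
      | bot =>
        simp only [topFun, WithBot.recBotCoe]
        refine iff_of_false ?_ ?_
        · simp
        · simp
      | coe c =>
        simp only [topFun, WithBot.recBotCoe, WithBot.coe_le_coe]
        obtain ⟨a1, a2⟩ := a
        obtain ⟨c1, c2⟩ := c
        constructor
        · intro h
          obtain rfl : a1 = c1 := index_eq_of_le h
          refine Sigma.le_def.mpr ⟨rfl, ?_⟩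
          exact le_of_eq (hR _ _)
        · intro h
          obtain ⟨h1, -⟩ := Sigma.le_def.mp h
          obtain rfl : a1 = c1 := h1
          exact Sigma.mk_le_mk_iff.mpr le_rfl

end Isos
section Package
variable {Q : Type*} [PartialOrder Q] {P : ℕ → Type} [∀ n, PartialOrder (P n)]

lemma package (e : Q ≃o WithBot ((n : ℕ) × P n)) (b : ∀ n, P n)
    (hchain : ∀ n (x : P n), {y : P n | y ≤ x}.Finite)
    (hbmin : ∀ n (x : P n), b n ≤ x) (σ : ℕ → Ordinal)
    (hσ1 : ∀ n, derIter (univ : Set (P n)) (σ n) = {b n})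
    (hσ2 : ∀ n β, β < σ n → derIter (univ : Set (P n)) β ≠ {b n})
    (Λ : Ordinal) (hΛ : ∀ n, σ n ≤ Λ) (HF : ∀ β < Λ, {n | σ n ≤ β}.Finite) :
    (∀ x, e.symm ⊥ ≤ x) ∧
    derIter (univ : Set Q) (Λ + 1) = {e.symm ⊥} ∧
    (∀ β ≤ Λ, derIter (univ : Set Q) β ≠ {e.symm ⊥}) ∧
    Nonempty ((derIter (univ : Set Q) Λ : Set Q) ≃o
      ↥(insert (⊥ : WithBot ((n : ℕ) × P n))
        (range fun n => (↑(⟨n, b n⟩ : (n : ℕ) × P n) : WithBot ((n : ℕ) × P n))))) := by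
  have huniv : (univ : Set Q) = e.symm '' univ := by
    rw [image_univ, OrderIso.range_eq]
  have htrans : ∀ β, derIter (univ : Set Q) β
      = e.symm '' derIter (univ : Set (WithBot ((n : ℕ) × P n))) β := by
    intro β
    conv_lhs => rw [huniv]
    rw [derIter_image]
  refine ⟨?_, ?_, ?_, ?_⟩
  · intro x
    have := e.symm.monotone (bot_le : (⊥ : WithBot ((n : ℕ) × P n)) ≤ e x)
    rwa [e.symm_apply_apply] at this
  · rw [htrans, derIter_succ, derIter_famSet_top hchain hbmin σ hσ1 hσ2 Λ hΛ HF,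
      derStep_final hchain hbmin, image_singleton]
  · intro β hβ heq
    have hmem : e.symm ↑(⟨0, b 0⟩ : (n : ℕ) × P n) ∈ derIter (univ : Set Q) β := by
      rw [htrans β, derIter_famSet hchain hbmin σ hσ2 Λ HF β hβ]
      exact ⟨_, coe_mem_famSet.mpr (min_mem_derIter (hbmin 0) (mem_univ _) β), rfl⟩
    rw [heq, mem_singleton_iff] at hmem
    have := e.symm.injective hmem
    exact absurd this (by simp)
  · rw [htrans, derIter_famSet_top hchain hbmin σ hσ1 hσ2 Λ hΛ HF]
    exact ⟨(isoImage e.symm _).symm⟩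
end Package
end Aux

theorem statement5
    (V : Ordinal → Type) [∀ γ : Ordinal, PartialOrder (V γ)]
    (seq : Ordinal → ℕ → Ordinal)
    (hV0 : ∀ x y : V 0, x = y) (hV0ne : Nonempty (V 0))
    (hchainfin : ∀ γ : Ordinal, γ.card ≤ Cardinal.aleph0 → ∀ x : V γ, {y : V γ | y ≤ x}.Finite)
    (hchainlin : ∀ γ : Ordinal, γ.card ≤ Cardinal.aleph0 →
      ∀ x y w : V γ, y ≤ x → w ≤ x → y ≤ w ∨ w ≤ y)
    (hseqmono : ∀ γ : Ordinal, γ.card ≤ Cardinal.aleph0 → Order.IsSuccLimit γ → StrictMono (seq γ))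
    (hseqsucc : ∀ γ : Ordinal, γ.card ≤ Cardinal.aleph0 → Order.IsSuccLimit γ →
      ∀ n : ℕ, ∃ δ : Ordinal, seq γ n = δ + 1)
    (hseqlt : ∀ γ : Ordinal, γ.card ≤ Cardinal.aleph0 → Order.IsSuccLimit γ → ∀ n : ℕ, seq γ n < γ)
    (hseqcof : ∀ γ : Ordinal, γ.card ≤ Cardinal.aleph0 → Order.IsSuccLimit γ →
      ∀ δ : Ordinal, δ < γ → ∃ n : ℕ, δ < seq γ n)
    (hsucc : ∀ γ : Ordinal, γ.card ≤ Cardinal.aleph0 → (γ = 0 ∨ ∃ δ : Ordinal, γ = δ + 1) →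
      Nonempty (V (γ + 1) ≃o WithBot (Σ _ : ℕ, V γ)))
    (hlimsucc : ∀ γ : Ordinal, γ.card ≤ Cardinal.aleph0 → Order.IsSuccLimit γ →
      Nonempty (V (γ + 1) ≃o WithBot (V γ)))
    (hlim : ∀ γ : Ordinal, γ.card ≤ Cardinal.aleph0 → Order.IsSuccLimit γ →
      Nonempty (V γ ≃o (Σ n : ℕ, V (seq γ n))))
    (α : Ordinal) (hαc : α.card ≤ Cardinal.aleph0) :
    Nonempty (↥(derIter (Set.univ : Set (V (α + 1))) α) ≃o V 1) ∧
    Nonempty (↥(derIter (Set.univ : Set (V (α + 1))) (α + 1)) ≃o V 0) := by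
  classical
  have u0 : V 0 := Classical.choice hV0ne
  have hc0 : (0 : Ordinal).card ≤ Cardinal.aleph0 := by simp
  have e1 : V 1 ≃o WithBot ((_ : ℕ) × V 0) := by
    rw [show (1 : Ordinal) = 0 + 1 by simp]
    exact (hsucc 0 hc0 (Or.inl rfl)).some
  have main : ∀ γ : Ordinal, γ.card ≤ Cardinal.aleph0 →
      ∃ b : V (γ + 1), (∀ x, b ≤ x) ∧
        derIter (univ : Set (V (γ + 1))) (γ + 1) = {b} ∧
        (∀ β ≤ γ, derIter (univ : Set (V (γ + 1))) β ≠ {b}) ∧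
        Nonempty (↥(derIter (univ : Set (V (γ + 1))) γ) ≃o V 1) := by
    intro γ
    induction γ using Ordinal.induction with
    | h γ IH =>
      intro hc
      rcases Ordinal.zero_or_succ_or_isSuccLimit γ with h0 | ⟨δ, hδ⟩ | hl
      · -- γ = 0
        subst h0
        have e : V (0 + 1) ≃o WithBot ((n : ℕ) × V 0) := (hsucc 0 hc (Or.inl rfl)).some
        have hbmin : ∀ (n : ℕ) (x : V 0), (fun _ : ℕ => u0) n ≤ x :=
          fun n x => le_of_eq (hV0 u0 x)
        have hσ1 : ∀ n : ℕ, derIter (univ : Set (V 0)) ((fun _ : ℕ => (0 : Ordinal)) n)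
            = {(fun _ : ℕ => u0) n} := by
          intro n
          rw [derIter_zero]
          exact Set.eq_singleton_iff_unique_mem.mpr ⟨mem_univ _, fun x _ => hV0 x u0⟩
        have hσ2 : ∀ (n : ℕ) (β : Ordinal), β < (0 : Ordinal)
            → derIter (univ : Set (V 0)) β ≠ {u0} :=
          fun n β hβ => absurd hβ (zero_le.not_gt)
        obtain ⟨p1, p2, p3, p4⟩ := package e (fun _ => u0) (fun n => hchainfin 0 hc0)
          hbmin (fun _ => 0) hσ1 hσ2 0 (fun n => le_rfl)
          (fun β hβ => absurd hβ (zero_le.not_gt))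
        refine ⟨e.symm ⊥, p1, p2, p3, ?_⟩
        obtain ⟨i⟩ := p4
        exact ⟨i.trans ((topIso (fun _ : ℕ => u0) hV0 u0).symm.trans e1.symm)⟩
      · -- γ = δ + 1
        have hδ' : γ = δ + 1 := hδ.symm
        subst hδ'
        have hδc : δ.card ≤ Cardinal.aleph0 :=
          le_trans (Ordinal.card_le_card (Order.le_succ δ)) hc
        obtain ⟨bδ, hbδmin, hfixδ, hneδ, -⟩ := IH δ (Order.lt_succ δ) hδc
        have e : V ((δ + 1) + 1) ≃o WithBot ((n : ℕ) × V (δ + 1)) :=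
          (hsucc (δ + 1) hc (Or.inr ⟨δ, rfl⟩)).some
        have hσ2 : ∀ (n : ℕ) (β : Ordinal), β < δ + 1
            → derIter (univ : Set (V (δ + 1))) β ≠ {bδ} :=
          fun n β hβ => hneδ β (Order.le_of_lt_succ hβ)
        have HF : ∀ β < δ + 1, {n : ℕ | δ + 1 ≤ β}.Finite := by
          intro β hβ
          have : {n : ℕ | δ + 1 ≤ β} = ∅ :=
            eq_empty_of_forall_notMem fun n hn => absurd hn (not_le.mpr hβ)
          rw [this]; exact finite_empty
        obtain ⟨p1, p2, p3, p4⟩ := package e (fun _ => bδ)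
          (fun n => hchainfin (δ + 1) hc) (fun n => hbδmin) (fun _ => δ + 1)
          (fun n => hfixδ) hσ2 (δ + 1) (fun n => le_rfl) HF
        refine ⟨e.symm ⊥, p1, p2, p3, ?_⟩
        obtain ⟨i⟩ := p4
        exact ⟨i.trans ((topIso (fun _ : ℕ => bδ) hV0 u0).symm.trans e1.symm)⟩
      · -- γ limit
        have e : V (γ + 1) ≃o WithBot ((n : ℕ) × V (seq γ n)) :=
          (hlimsucc γ hc hl).some.trans (OrderIso.withBotCongr (hlim γ hc hl).some)
        have hcards : ∀ n : ℕ, (seq γ n).card ≤ Cardinal.aleph0 :=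
          fun n => le_trans (Ordinal.card_le_card (hseqlt γ hc hl n).le) hc
        have H : ∀ n : ℕ, ∃ b : V (seq γ n), (∀ x, b ≤ x) ∧
            derIter (univ : Set (V (seq γ n))) (seq γ n) = {b} ∧
            ∀ β : Ordinal, β < seq γ n → derIter (univ : Set (V (seq γ n))) β ≠ {b} := by
          intro n
          obtain ⟨δn, hδn⟩ := hseqsucc γ hc hl n
          have hδlt : δn < γ := lt_of_lt_of_le (by rw [hδn]; exact Order.lt_succ δn)
            (hseqlt γ hc hl n).le
          obtain ⟨b, h1, h2, h3, -⟩ := IH δn hδlt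
            (le_trans (Ordinal.card_le_card hδlt.le) hc)
          rw [hδn]
          exact ⟨b, h1, h2, fun β hβ => h3 β (Order.le_of_lt_succ hβ)⟩
        choose b hb1 hb2 hb3 using H
        have HF : ∀ β < γ, {n : ℕ | seq γ n ≤ β}.Finite := by
          intro β hβ
          obtain ⟨N, hN⟩ := hseqcof γ hc hl β hβ
          refine (Set.finite_Iio N).subset fun n hn => ?_
          by_contra hge
          have hNn : N ≤ n := not_lt.mp (by simpa [Set.mem_Iio] using hge)
          have : seq γ N ≤ seq γ n := (hseqmono γ hc hl).monotone hNn
          exact absurd (lt_of_lt_of_le hN this) (not_lt.mpr hn)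
        obtain ⟨p1, p2, p3, p4⟩ := package e b
          (fun n => hchainfin (seq γ n) (hcards n)) hb1 (seq γ) hb2 hb3
          γ (fun n => (hseqlt γ hc hl n).le) HF
        refine ⟨e.symm ⊥, p1, p2, p3, ?_⟩
        obtain ⟨i⟩ := p4
        exact ⟨i.trans ((topIso b hV0 u0).symm.trans e1.symm)⟩
  obtain ⟨b, hbmin, hfix, hne, hiso⟩ := main α hαc
  refine ⟨hiso, ?_⟩
  rw [hfix]
  exact ⟨singIso b hV0 u0⟩
end Paper
end
end
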